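/- For a linear regression equation y(t) = φ(t)ᵀθ with θ ∈ ℝ^q, identifiability (existence of times t₁,...,t_q with rank[φ(t₁) | ... | φ(t_q)] = q) holds if and only if φ is interval exciting, i.e. there exist C > 0 and t_c > 0 with ∫₀^{t_c} φ(s)φ(s)ᵀ ds ≥ C I_q. -/

import Mathlib

open Matrix MeasureTheory intervalIntegral Set

lemma stmt8_quad {q : ℕ} (φ : ℝ → Fin q → ℝ) (hφ : Continuous φ) (T : ℝ)
    (x : Fin q → ℝ) :
    x ⬝ᵥ ((Matrix.of fun i j => ∫ s in (0:ℝ)..T, φ s i * φ s j) *ᵥ x)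
      = ∫ s in (0:ℝ)..T, (∑ i, φ s i * x i)^2 := by
  have hc : ∀ i j : Fin q, IntervalIntegrable (fun s => φ s i * φ s j) volume 0 T := fun i j =>
    (((continuous_apply i).comp hφ).mul ((continuous_apply j).comp hφ)).intervalIntegrable 0 T
  calc x ⬝ᵥ ((Matrix.of fun i j => ∫ s in (0:ℝ)..T, φ s i * φ s j) *ᵥ x)
      = ∑ i, ∑ j, (x i * x j) * ∫ s in (0:ℝ)..T, φ s i * φ s j := by
        simp only [dotProduct, mulVec, Matrix.of_apply, Finset.mul_sum]
        exact Finset.sum_congr rfl fun i _ => Finset.sum_congr rfl fun j _ => by ring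
    _ = ∑ i, ∑ j, ∫ s in (0:ℝ)..T, (x i * x j) * (φ s i * φ s j) := by
        simp only [intervalIntegral.integral_const_mul]
    _ = ∑ i, ∫ s in (0:ℝ)..T, ∑ j, (x i * x j) * (φ s i * φ s j) := by
        exact Finset.sum_congr rfl fun i _ =>
          (intervalIntegral.integral_finset_sum fun j _ => (hc i j).const_mul _).symm
    _ = ∫ s in (0:ℝ)..T, ∑ i, ∑ j, (x i * x j) * (φ s i * φ s j) := by
        refine (intervalIntegral.integral_finset_sum fun i _ => ?_).symm
        refine Continuous.intervalIntegrable ?_ 0 T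
        exact continuous_finset_sum _ fun j _ => continuous_const.mul
          (((continuous_apply i).comp hφ).mul ((continuous_apply j).comp hφ))
    _ = ∫ s in (0:ℝ)..T, (∑ i, φ s i * x i)^2 := by
        refine intervalIntegral.integral_congr fun s _ => ?_
        rw [sq, Finset.sum_mul_sum]
        exact Finset.sum_congr rfl fun i _ => Finset.sum_congr rfl fun j _ => by ring

lemma stmt8_cont {q : ℕ} (A : Matrix (Fin q) (Fin q) ℝ) :
    Continuous fun x : Fin q → ℝ => x ⬝ᵥ (A *ᵥ x) := by
  simp only [dotProduct, mulVec]
  exact continuous_finset_sum _ fun i _ => (continuous_apply i).mul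
    (continuous_finset_sum _ fun j _ => continuous_const.mul (continuous_apply j))

lemma stmt8_zero {T : ℝ} (hT : 0 < T) {f : ℝ → ℝ} (hfc : Continuous f)
    (hf0 : ∀ s, 0 ≤ f s) (hint : ∫ s in (0:ℝ)..T, f s = 0) :
    ∀ s ∈ Set.Icc (0:ℝ) T, f s = 0 := by
  have hae : f =ᵐ[volume.restrict (Set.Ioc 0 T)] 0 :=
    (intervalIntegral.integral_eq_zero_iff_of_le_of_nonneg_ae hT.le
      (Filter.Eventually.of_forall hf0) (hfc.intervalIntegrable 0 T)).mp hint
  have hae' : f =ᵐ[volume.restrict (Set.Icc 0 T)] 0 := by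
    rwa [Measure.restrict_congr_set Ioc_ae_eq_Icc] at hae
  exact Measure.eqOn_Icc_of_ae_eq volume hT.ne hae' hfc.continuousOn continuousOn_const

/-- for a linear regression with regressor `φ`, identifiability
(existence of `q` times where the regressor vectors are linearly independent) is
equivalent to interval excitation of `φ`. -/
theorem stmt8 {q : ℕ} (φ : ℝ → Fin q → ℝ) (hφ : Continuous φ) :
    (∃ t : Fin q → ℝ, (∀ i, 0 ≤ t i) ∧
      LinearIndependent ℝ (fun i : Fin q => φ (t i))) ↔
    (∃ C t_c : ℝ, 0 < C ∧ 0 < t_c ∧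
      (Matrix.of (fun i j => ∫ s in (0:ℝ)..t_c, φ s i * φ s j) -
        C • (1 : Matrix (Fin q) (Fin q) ℝ)).PosSemidef) := by
  constructor
  · rintro ⟨t, ht0, hli⟩
    rcases Nat.eq_zero_or_pos q with hq | hq
    · subst hq
      refine ⟨1, 1, one_pos, one_pos, ?_, fun y => ?_⟩
      · show _ = _
        ext i j
        exact i.elim0
      · simp [dotProduct, Finsupp.sum_fintype]
    · haveI : NeZero q := ⟨hq.ne'⟩
      have hne : (Finset.univ : Finset (Fin q)).Nonempty := Finset.univ_nonempty
      set T : ℝ := Finset.univ.sup' hne t + 1 with hTdef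
      have hT : 0 < T := by
        have h1 := ht0 ⟨0, hq⟩
        have h2 := Finset.le_sup' t (Finset.mem_univ (⟨0, hq⟩ : Fin q))
        simp only [hTdef]; linarith
      have htmem : ∀ i, t i ∈ Set.Icc (0:ℝ) T := fun i =>
        ⟨ht0 i, by have := Finset.le_sup' t (Finset.mem_univ i); simp only [hTdef]; linarith⟩
      set A : Matrix (Fin q) (Fin q) ℝ :=
        Matrix.of (fun i j => ∫ s in (0:ℝ)..T, φ s i * φ s j) with hA
      have hquad : ∀ x : Fin q → ℝ, x ⬝ᵥ (A *ᵥ x) = ∫ s in (0:ℝ)..T, (∑ i, φ s i * x i)^2 :=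
        fun x => stmt8_quad φ hφ T x
      have hnonneg : ∀ x : Fin q → ℝ, 0 ≤ x ⬝ᵥ (A *ᵥ x) := by
        intro x
        rw [hquad]
        exact intervalIntegral.integral_nonneg hT.le (fun s _ => sq_nonneg _)
      have hpd : ∀ x : Fin q → ℝ, x ≠ 0 → 0 < x ⬝ᵥ (A *ᵥ x) := by
        intro x hx
        rcases (hnonneg x).lt_or_eq with h | h
        · exact h
        · exfalso
          have hcont : Continuous fun s => (∑ i, φ s i * x i)^2 :=
            (continuous_finset_sum _ fun i _ =>
              ((continuous_apply i).comp hφ).mul continuous_const).pow 2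
          have hint0 : ∫ s in (0:ℝ)..T, (∑ i, φ s i * x i)^2 = 0 := by
            rw [← hquad x]; exact h.symm
          have hz := stmt8_zero hT hcont (fun s => sq_nonneg _) hint0
          have hB : IsUnit (Matrix.of fun i j => φ (t i) j) := by
            rw [← Matrix.linearIndependent_rows_iff_isUnit]
            exact hli
          have hBx : (Matrix.of fun i j => φ (t i) j) *ᵥ x = 0 := by
            funext i
            have h1 := hz (t i) (htmem i)
            have h0 : ∑ j, φ (t i) j * x j = 0 := by
              exact sq_eq_zero_iff.mp h1
            simpa [Matrix.mulVec, dotProduct] using h0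
          have hinj := Matrix.mulVec_injective_iff_isUnit.mpr hB
          exact hx (hinj (by rw [hBx, Matrix.mulVec_zero]))
      -- minimum of the quadratic form on the "dot-product sphere"
      set Sph : Set (Fin q → ℝ) := {x | x ⬝ᵥ x = 1} with hSdef
      have hdc : Continuous fun x : Fin q → ℝ => x ⬝ᵥ x := by
        simp only [dotProduct]
        exact continuous_finset_sum _ fun i _ => (continuous_apply i).mul (continuous_apply i)
      have hScl : IsClosed Sph := isClosed_eq hdc continuous_const
      have hSb : Sph ⊆ Metric.closedBall 0 1 := by
        intro x hx
        rw [Metric.mem_closedBall, dist_zero_right]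
        rw [pi_norm_le_iff_of_nonneg zero_le_one]
        intro i
        rw [Real.norm_eq_abs, ← sq_le_one_iff_abs_le_one]
        have h1 : x i * x i ≤ ∑ j, x j * x j :=
          Finset.single_le_sum (fun j _ => mul_self_nonneg (x j)) (Finset.mem_univ i)
        have hx1 : ∑ j, x j * x j = 1 := hx
        nlinarith
      have hcpt : IsCompact Sph :=
        (isCompact_closedBall (0 : Fin q → ℝ) 1).of_isClosed_subset hScl hSb
      have hSne : Sph.Nonempty := by
        refine ⟨Pi.single ⟨0, hq⟩ 1, ?_⟩
        show (Pi.single (⟨0, hq⟩ : Fin q) (1:ℝ)) ⬝ᵥ (Pi.single ⟨0, hq⟩ 1) = 1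
        simp [dotProduct, Pi.single_apply]
      obtain ⟨z, hzS, hzmin⟩ := hcpt.exists_isMinOn hSne (stmt8_cont A).continuousOn
      have hzz : z ⬝ᵥ z = 1 := hzS
      have hz0 : z ≠ 0 := by
        intro h
        rw [h] at hzz
        simp [dotProduct] at hzz
      have hC : 0 < z ⬝ᵥ (A *ᵥ z) := hpd z hz0
      refine ⟨z ⬝ᵥ (A *ᵥ z), T, hC, hT, Matrix.posSemidef_iff_dotProduct_mulVec.mpr ⟨?_, ?_⟩⟩
      · -- Hermitian
        refine Matrix.IsHermitian.sub ?_ ?_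
        · show Aᴴ = A
          ext i j
          simp only [Matrix.conjTranspose_apply, hA, Matrix.of_apply, star_trivial]
          exact intervalIntegral.integral_congr fun s _ => mul_comm _ _
        · show _ = _
          rw [Matrix.conjTranspose_smul, Matrix.conjTranspose_one, star_trivial]
      · intro y
        set C := z ⬝ᵥ (A *ᵥ z) with hCdef
        have key : C * (y ⬝ᵥ y) ≤ y ⬝ᵥ (A *ᵥ y) := by
          rcases eq_or_ne y 0 with rfl | hy
          · simp
          · have hyy : 0 < y ⬝ᵥ y := by
              refine lt_of_le_of_ne (Finset.sum_nonneg fun i _ => mul_self_nonneg (y i)) ?_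
              exact fun h => hy (dotProduct_self_eq_zero.mp h.symm)
            set r : ℝ := Real.sqrt (y ⬝ᵥ y) with hr
            have hrr : r * r = y ⬝ᵥ y := Real.mul_self_sqrt hyy.le
            have hrpos : 0 < r := Real.sqrt_pos.mpr hyy
            have hw : (r⁻¹ • y) ∈ Sph := by
              show (r⁻¹ • y) ⬝ᵥ (r⁻¹ • y) = 1
              rw [smul_dotProduct, dotProduct_smul, smul_eq_mul, smul_eq_mul]
              field_simp
              linarith [hrr]
            have hmin := hzmin hw
            have hgw : (r⁻¹ • y) ⬝ᵥ (A *ᵥ (r⁻¹ • y)) = r⁻¹ * (r⁻¹ * (y ⬝ᵥ (A *ᵥ y))) := by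
              rw [Matrix.mulVec_smul, smul_dotProduct, dotProduct_smul,
                smul_eq_mul, smul_eq_mul]
            have h2 : C ≤ r⁻¹ * (r⁻¹ * (y ⬝ᵥ (A *ᵥ y))) := by
              rw [← hgw]; exact hmin
            have h3 := mul_le_mul_of_nonneg_left h2 (mul_pos hrpos hrpos).le
            calc C * (y ⬝ᵥ y) = (r * r) * C := by rw [hrr]; ring
              _ ≤ (r * r) * (r⁻¹ * (r⁻¹ * (y ⬝ᵥ (A *ᵥ y)))) := by
                  exact mul_le_mul_of_nonneg_left h2 (by positivity)
              _ = y ⬝ᵥ (A *ᵥ y) := by field_simp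
        have expand : star y ⬝ᵥ ((A - C • 1) *ᵥ y) = y ⬝ᵥ (A *ᵥ y) - C * (y ⬝ᵥ y) := by
          rw [star_trivial, Matrix.sub_mulVec, dotProduct_sub, Matrix.smul_mulVec,
            Matrix.one_mulVec, dotProduct_smul, smul_eq_mul]
        rw [expand]
        linarith
  · rintro ⟨C, tc, hC, htc, hpsd⟩
    set A : Matrix (Fin q) (Fin q) ℝ :=
      Matrix.of (fun i j => ∫ s in (0:ℝ)..tc, φ s i * φ s j) with hA
    have key : ∀ x : Fin q → ℝ, C * (x ⬝ᵥ x) ≤ x ⬝ᵥ (A *ᵥ x) := by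
      intro x
      have h2 := hpsd.dotProduct_mulVec_nonneg x
      rw [star_trivial, Matrix.sub_mulVec, dotProduct_sub, Matrix.smul_mulVec,
        Matrix.one_mulVec, dotProduct_smul, smul_eq_mul] at h2
      linarith
    set S : Set (Fin q → ℝ) := φ '' Set.Icc 0 tc with hSdef
    have hspan : Submodule.span ℝ S = ⊤ := by
      by_contra hne
      obtain ⟨f, hf0, hker⟩ :=
        (Submodule.span ℝ S).exists_le_ker_of_lt_top (lt_top_iff_ne_top.mpr hne)
      set x : Fin q → ℝ := fun j => f (Pi.single j 1) with hx
      have hxf : ∀ v : Fin q → ℝ, f v = ∑ j, v j * x j := by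
        intro v
        conv_lhs => rw [pi_eq_sum_univ v]
        rw [map_sum]
        refine Finset.sum_congr rfl fun j _ => ?_
        rw [f.map_smul, smul_eq_mul]
        congr 1
        show f _ = f _
        congr 1
        funext k
        simp [Pi.single_apply, eq_comm]
      have hx0 : x ≠ 0 := by
        intro h
        refine hf0 (LinearMap.ext fun v => ?_)
        rw [hxf v, h]
        simp
      have hquadz : x ⬝ᵥ (A *ᵥ x) = 0 := by
        rw [hA]
        rw [stmt8_quad φ hφ tc x]
        have heq : Set.EqOn (fun s => (∑ i, φ s i * x i)^2) (fun _ => (0:ℝ))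
            (Set.uIcc (0:ℝ) tc) := by
          intro s hs
          have hmem : φ s ∈ S := ⟨s, by rwa [Set.uIcc_of_le htc.le] at hs, rfl⟩
          have hfs : f (φ s) = 0 := hker (Submodule.subset_span hmem)
          rw [hxf] at hfs
          show (∑ i, φ s i * x i)^2 = 0
          rw [hfs]
          norm_num
        rw [intervalIntegral.integral_congr heq, intervalIntegral.integral_const, smul_zero]
      have hxx : 0 < x ⬝ᵥ x := by
        refine lt_of_le_of_ne (Finset.sum_nonneg fun i _ => mul_self_nonneg (x i)) ?_
        exact fun h => hx0 (dotProduct_self_eq_zero.mp h.symm)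
      nlinarith [key x]
    obtain ⟨b, hbS, hbspan, hbli⟩ := exists_linearIndependent ℝ S
    rw [hspan] at hbspan
    have hbfin : b.Finite := hbli.setFinite
    haveI := hbfin.fintype
    have B : Module.Basis b ℝ (Fin q → ℝ) :=
      Module.Basis.mk hbli (by rw [Subtype.range_coe, hbspan])
    have hcard : Fintype.card b = q := by
      have h1 := Module.finrank_eq_card_basis B
      rw [Module.finrank_fin_fun ℝ] at h1
      exact h1.symm
    have e : b ≃ Fin q := Fintype.equivFinOfCardEq hcard
    have hsel : ∀ v : b, ∃ s : ℝ, s ∈ Set.Icc (0:ℝ) tc ∧ φ s = (v : Fin q → ℝ) := by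
      intro v
      obtain ⟨s, hs, hsv⟩ := hbS v.2
      exact ⟨s, hs, hsv⟩
    choose τ hτ1 hτ2 using hsel
    refine ⟨fun i => τ (e.symm i), fun i => (hτ1 _).1, ?_⟩
    have hfun : (fun i : Fin q => φ (τ (e.symm i)))
        = fun i => ((e.symm i : b) : Fin q → ℝ) := by
      funext i
      rw [hτ2]
    rw [hfun]
    exact hbli.comp e.symm e.symm.injective
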